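/- For n independent binary attributes with favorable probabilities p_i ∈ (0,1) and conjunctive label, and any two distinct attributes o, q: G(o) - G(q) = 2·p_o·p_q·(∏_{i ∉ {o,q}} p_i²)·(p_o - p_q). In particular G(o) < G(q) iff p_o < p_q. -/

import Mathlib

open Finset

/-- Difference of weighted Gini impurities of splitting on two distinct attributes `o` and
`q`, for `n` independent binary attributes with conjunctive label; in particular
`G(o) < G(q)` iff `p o < p q`. -/
theorem gini_impurity_multi_difference (n : ℕ) (p : Fin n → ℝ)
    (hp : ∀ i, 0 < p i ∧ p i < 1) (o q : Fin n) (hoq : o ≠ q) :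
    ((2 * (∏ j, p j) - 2 * p o * ∏ j ∈ univ.erase o, (p j) ^ 2)
        - (2 * (∏ j, p j) - 2 * p q * ∏ j ∈ univ.erase q, (p j) ^ 2)
      = 2 * p o * p q * (∏ i ∈ (univ.erase o).erase q, (p i) ^ 2) * (p o - p q)) ∧
    ((2 * (∏ j, p j) - 2 * p o * ∏ j ∈ univ.erase o, (p j) ^ 2)
        < (2 * (∏ j, p j) - 2 * p q * ∏ j ∈ univ.erase q, (p j) ^ 2)
      ↔ p o < p q) := by
  set E := (univ.erase o).erase q with hE
  have hq : q ∈ univ.erase o := mem_erase.2 ⟨Ne.symm hoq, mem_univ q⟩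
  have ho : o ∈ univ.erase q := mem_erase.2 ⟨hoq, mem_univ o⟩
  have h1 : ∏ j ∈ univ.erase o, (p j) ^ 2 = (p q) ^ 2 * ∏ i ∈ E, (p i) ^ 2 := by
    rw [hE, ← Finset.mul_prod_erase _ _ hq]
  have h2 : ∏ j ∈ univ.erase q, (p j) ^ 2 = (p o) ^ 2 * ∏ i ∈ E, (p i) ^ 2 := by
    rw [hE, Finset.erase_right_comm, ← Finset.mul_prod_erase _ _ ho]
  have key : (2 * (∏ j, p j) - 2 * p o * ∏ j ∈ univ.erase o, (p j) ^ 2)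
        - (2 * (∏ j, p j) - 2 * p q * ∏ j ∈ univ.erase q, (p j) ^ 2)
      = 2 * p o * p q * (∏ i ∈ E, (p i) ^ 2) * (p o - p q) := by
    rw [h1, h2]; ring
  refine ⟨key, ?_⟩
  have hpos : 0 < 2 * p o * p q * (∏ i ∈ E, (p i) ^ 2) := by
    have := (hp o).1
    have := (hp q).1
    have : 0 < ∏ i ∈ E, (p i) ^ 2 :=
      Finset.prod_pos fun i _ => pow_pos (hp i).1 2
    positivity
  constructor
  · intro h
    have hlt : 2 * p o * p q * (∏ i ∈ E, (p i) ^ 2) * (p o - p q) < 0 := by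
      rw [← key]; linarith
    nlinarith
  · intro h
    have : 2 * p o * p q * (∏ i ∈ E, (p i) ^ 2) * (p o - p q) < 0 := by
      have := mul_neg_of_pos_of_neg hpos (by linarith : p o - p q < 0)
      linarith
    nlinarith [key]
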